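/- Assume in addition that g is continuous. Let v > 0 with g(2v) > 0, k_y ∈ [0,1], and let V be a random variable whose law is the mixture k_y·Uniform[0, g(2v)] + (1 − k_y)·δ₀, and set Y₀ = g⁻¹(V). Then for every nonnegative random variable X, independent of Y₀, with E[X] ≤ a ≤ g(2v), one has Pr{ X ≥ g(Y₀) } ≤ 1 − k_y·(1 − E[X]/g(2v)) ≤ 1 − k_y·(1 − a/g(2v)). -/

import Mathlib

open MeasureTheory ProbabilityTheory Set

lemma ginv_key (g : ℝ → ℝ) (hg_cont : ContinuousOn g (Ici 0)) (hg0 : g 0 = 0)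
    (b x : ℝ) (hb : 0 ≤ b) (hx : x ∈ Icc 0 (g b)) :
    0 ≤ sInf {y : ℝ | 0 ≤ y ∧ x ≤ g y} ∧ g (sInf {y : ℝ | 0 ≤ y ∧ x ≤ g y}) = x := by
  set S : Set ℝ := {y : ℝ | 0 ≤ y ∧ x ≤ g y} with hS
  have hIVT : x ∈ g '' Icc 0 b := by
    apply intermediate_value_Icc hb (hg_cont.mono (Icc_subset_Ici_self))
    rw [hg0]; exact hx
  obtain ⟨c, hc, hgc⟩ := hIVT
  have hSne : S.Nonempty := ⟨c, hc.1, hgc.ge⟩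
  have hSbdd : BddBelow S := ⟨0, fun y hy => hy.1⟩
  have hSclosed : IsClosed S := by
    have : S = Ici 0 ∩ g ⁻¹' Ici x := by
      ext y; simp [hS, mem_Ici, and_comm]
    rw [this]
    exact hg_cont.preimage_isClosed_of_isClosed isClosed_Ici isClosed_Ici
  have hmem : sInf S ∈ S := hSclosed.csInf_mem hSne hSbdd
  refine ⟨hmem.1, le_antisymm ?_ hmem.2⟩
  rcases eq_or_lt_of_le hmem.1 with h0 | h0
  · rw [← h0, hg0]; exact hx.1
  · by_contra hlt
    push_neg at hlt
    have hcw : ContinuousWithinAt g (Ici 0) (sInf S) := hg_cont _ (le_of_lt h0)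
    have hnhds : g ⁻¹' Ioi x ∈ nhdsWithin (sInf S) (Ici 0) :=
      hcw (Ioi_mem_nhds hlt)
    rw [Metric.mem_nhdsWithin_iff] at hnhds
    obtain ⟨ε, hε, hball⟩ := hnhds
    set y := max (sInf S - ε / 2) (sInf S / 2) with hy
    have hylt : y < sInf S := by
      apply max_lt <;> linarith
    have hy0 : 0 ≤ y := le_trans (by linarith) (le_max_right _ _)
    have hyball : y ∈ Metric.ball (sInf S) ε := by
      rw [Metric.mem_ball, Real.dist_eq, abs_sub_lt_iff]
      constructor
      · linarith
      · have : sInf S - ε / 2 ≤ y := le_max_left _ _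
        linarith
    have : y ∈ S := ⟨hy0, le_of_lt (hball ⟨hyball, hy0⟩)⟩
    exact absurd (csInf_le hSbdd this) (not_le.mpr hylt)

/-- The mixture law `k·Uniform[0,t] + (1−k)·δ₀` on `ℝ`. -/
noncomputable def unifMix (k t : ℝ) : Measure ℝ :=
  ENNReal.ofReal k • ((ENNReal.ofReal t)⁻¹ • volume.restrict (Icc 0 t)) +
    ENNReal.ofReal (1 - k) • Measure.dirac 0

/-- if `g` is in addition continuous, `V` has law
`k_y·Uniform[0,g(2v)] + (1−k_y)·δ₀` and `Y₀ = g⁻¹(V)`, then for every nonnegative `X`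
independent of `Y₀` with `E[X] ≤ a ≤ g(2v)`,
`Pr{X ≥ g(Y₀)} ≤ 1 − k_y(1 − E[X]/g(2v)) ≤ 1 − k_y(1 − a/g(2v))`. -/
theorem stmt10
    {Ω : Type*} [MeasurableSpace Ω] (P : Measure Ω) [IsProbabilityMeasure P]
    (g : ℝ → ℝ) (hg_mono : MonotoneOn g (Ici 0))
    (hg_nonneg : ∀ y, 0 ≤ y → 0 ≤ g y) (hg0 : g 0 = 0)
    (hg_cont : ContinuousOn g (Ici 0))
    (ginv : ℝ → ℝ) (hginv : ∀ x, ginv x = sInf {y : ℝ | 0 ≤ y ∧ x ≤ g y})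
    (v : ℝ) (hv : 0 < v) (hgv : 0 < g (2 * v))
    (ky : ℝ) (hky : ky ∈ Icc (0 : ℝ) 1)
    (V : Ω → ℝ) (hV : Measurable V) (hVlaw : P.map V = unifMix ky (g (2 * v)))
    (Y₀ : Ω → ℝ) (hY₀ : Y₀ = fun ω => ginv (V ω))
    (a : ℝ) (ha : 0 < a) (hagv : a ≤ g (2 * v))
    (X : Ω → ℝ) (hX : Measurable X) (hXnonneg : ∀ ω, 0 ≤ X ω)
    (hXint : Integrable X P) (hEX : (∫ ω, X ω ∂P) ≤ a)
    (hindep : IndepFun X Y₀ P) :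
    (P {ω | g (Y₀ ω) ≤ X ω}).toReal ≤ 1 - ky * (1 - (∫ ω, X ω ∂P) / g (2 * v)) ∧
    1 - ky * (1 - (∫ ω, X ω ∂P) / g (2 * v)) ≤ 1 - ky * (1 - a / g (2 * v)) := by
  obtain ⟨hky0, hky1⟩ := hky
  set t := g (2 * v) with ht
  set EX := ∫ ω, X ω ∂P with hEXdef
  have hEX0 : 0 ≤ EX := integral_nonneg hXnonneg
  have ht0 : 0 < t := hgv
  refine ⟨?_, ?_⟩
  swap
  · have hd : EX / t ≤ a / t := by gcongr
    nlinarith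
  -- main bound
  -- the a.e. identification of g(Y₀) with V
  have hVIcc : ∀ᵐ ω ∂P, V ω ∈ Icc 0 t := by
    have hnull : P (V ⁻¹' (Icc (0:ℝ) t)ᶜ) = 0 := by
      rw [← Measure.map_apply hV measurableSet_Icc.compl, hVlaw]
      have h2' : (0:ℝ) ∉ (Icc (0:ℝ) t)ᶜ := fun h => h ⟨le_refl _, ht0.le⟩
      simp only [unifMix, Measure.add_apply, Measure.smul_apply, smul_eq_mul,
        Measure.restrict_apply measurableSet_Icc.compl, compl_inter_self,
        measure_empty, mul_zero, Measure.dirac_apply' _ measurableSet_Icc.compl,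
        indicator_of_notMem h2', add_zero]
    rw [ae_iff]
    exact hnull
  have hkey : ∀ᵐ ω ∂P, g (max (Y₀ ω) 0) = V ω ∧ g (Y₀ ω) = V ω := by
    filter_upwards [hVIcc] with ω hω
    have h := ginv_key g hg_cont hg0 (2 * v) (V ω) (by linarith) hω
    have hY : Y₀ ω = sInf {y : ℝ | 0 ≤ y ∧ V ω ≤ g y} := by rw [hY₀]; exact hginv _
    constructor
    · rw [hY, max_eq_left h.1]; exact h.2
    · rw [hY]; exact h.2
  -- independence of X and V
  have hg'c : Continuous (fun y : ℝ => g (max y 0)) :=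
    hg_cont.comp_continuous (continuous_id.max continuous_const)
      (fun y => le_max_right y 0)
  have hXW : IndepFun X (fun ω => g (max (Y₀ ω) 0)) P :=
    hindep.comp measurable_id hg'c.measurable
  have hXV2 : IndepFun X V P :=
    hXW.congr (Filter.EventuallyEq.refl _ _) (hkey.mono fun ω h => h.1)
  haveI : IsProbabilityMeasure (P.map V) := Measure.isProbabilityMeasure_map hV.aemeasurable
  haveI : IsProbabilityMeasure (P.map X) := Measure.isProbabilityMeasure_map hX.aemeasurable
  have hmeasS : MeasurableSet {p : ℝ × ℝ | p.2 ≤ p.1} :=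
    measurableSet_le measurable_snd measurable_fst
  have hprod := (indepFun_iff_map_prod_eq_prod_map_map hX.aemeasurable
    hV.aemeasurable).mp hXV2
  have hPA : P {ω | g (Y₀ ω) ≤ X ω}
      = ∫⁻ x, (P.map V) (Iic x) ∂(P.map X) := by
    have e1 : P {ω | g (Y₀ ω) ≤ X ω} = P {ω | V ω ≤ X ω} := by
      apply measure_congr
      rw [Filter.eventuallyEq_set]
      filter_upwards [hkey] with ω h
      simp only [mem_setOf_eq, h.2]
    have e2 : P {ω | V ω ≤ X ω}
        = P.map (fun ω => (X ω, V ω)) {p : ℝ × ℝ | p.2 ≤ p.1} := by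
      rw [Measure.map_apply (hX.prodMk hV) hmeasS]
      rfl
    rw [e1, e2, hprod, Measure.prod_apply hmeasS]
    rfl
  -- bound on the CDF of V
  have hIic : ∀ x : ℝ, 0 ≤ x → (P.map V) (Iic x)
      ≤ ENNReal.ofReal ky * (ENNReal.ofReal t)⁻¹ * ENNReal.ofReal x
        + ENNReal.ofReal (1 - ky) := by
    intro x hx
    rw [hVlaw]
    have hinter : Iic x ∩ Icc 0 t = Icc 0 (min x t) := by
      ext w; simp only [mem_inter_iff, mem_Iic, mem_Icc, le_min_iff]; tauto
    have h0x : (0:ℝ) ∈ Iic x := mem_Iic.mpr hx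
    simp only [unifMix, Measure.add_apply, Measure.smul_apply, smul_eq_mul,
      Measure.restrict_apply measurableSet_Iic, hinter, Real.volume_Icc,
      Measure.dirac_apply' _ measurableSet_Iic, indicator_of_mem h0x,
      Pi.one_apply, mul_one, sub_zero]
    rw [← mul_assoc]
    gcongr
    exact min_le_left _ _
  have haeNonneg : ∀ᵐ x ∂(P.map X), 0 ≤ x := by
    rw [ae_map_iff hX.aemeasurable (measurableSet_Ici : MeasurableSet (Ici (0:ℝ)))]
    exact ae_of_all _ hXnonneg
  have hbound : P {ω | g (Y₀ ω) ≤ X ω}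
      ≤ ENNReal.ofReal ky * (ENNReal.ofReal t)⁻¹ * ENNReal.ofReal EX
        + ENNReal.ofReal (1 - ky) := by
    rw [hPA]
    calc ∫⁻ x, (P.map V) (Iic x) ∂(P.map X)
        ≤ ∫⁻ x, (ENNReal.ofReal ky * (ENNReal.ofReal t)⁻¹ * ENNReal.ofReal x
            + ENNReal.ofReal (1 - ky)) ∂(P.map X) := by
          apply lintegral_mono_ae
          filter_upwards [haeNonneg] with x hx
          exact hIic x hx
      _ = ENNReal.ofReal ky * (ENNReal.ofReal t)⁻¹
            * (∫⁻ x, ENNReal.ofReal x ∂(P.map X)) + ENNReal.ofReal (1 - ky) := by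
          rw [lintegral_add_right _ measurable_const, lintegral_const,
            measure_univ, mul_one, lintegral_const_mul _ ENNReal.measurable_ofReal]
      _ = ENNReal.ofReal ky * (ENNReal.ofReal t)⁻¹ * ENNReal.ofReal EX
            + ENNReal.ofReal (1 - ky) := by
          rw [lintegral_map ENNReal.measurable_ofReal hX,
            ← ofReal_integral_eq_lintegral_ofReal hXint (ae_of_all _ hXnonneg)]
  have hrhs : ENNReal.ofReal ky * (ENNReal.ofReal t)⁻¹ * ENNReal.ofReal EX
        + ENNReal.ofReal (1 - ky)
      = ENNReal.ofReal (ky * t⁻¹ * EX + (1 - ky)) := by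
    rw [← ENNReal.ofReal_inv_of_pos ht0, ← ENNReal.ofReal_mul hky0,
      ← ENNReal.ofReal_mul (by positivity), ← ENNReal.ofReal_add (by positivity)
        (by linarith)]
  rw [hrhs] at hbound
  have := ENNReal.toReal_le_of_le_ofReal
    (add_nonneg (by positivity) (by linarith)) hbound
  have heq : ky * t⁻¹ * EX + (1 - ky) = 1 - ky * (1 - EX / t) := by
    field_simp
    ring
  linarith
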